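/- Let m, n be positive integers, let A be a real p×(mn) matrix, f ∈ ℝ^p, λ > 0, ε > 0, M ≥ 0, and suppose ker(A) ∩ ker(∇) = {0}. Then for all ρ₂ sufficiently large (depending on λ, A, ∇, M, ε, m, n) there exist constants c₁ > 0 and c₂ > 0 with the following property. Suppose u, u⁺ ∈ ℝ^{m×n}, h, h⁺ ∈ ℝ^{m×n} × ℝ^{m×n}, and dual variables b, b⁺ satisfy: (i) u⁺ is a global minimizer of v ↦ L(v, h; b); (ii) h⁺ is a global minimizer of g ↦ L(u⁺, g; b) over g ≠ 0; (iii) b⁺ = b + ∇u⁺ − h⁺; (iv) ‖h‖₂ ≥ ε and ‖h⁺‖₂ ≥ ε; (v) ‖∇u‖₁ ≤ M and ‖∇u⁺‖₁ ≤ M; (vi) b = −(‖∇u‖₁/ρ₂)·h/‖h‖₂³. Then L(u⁺, h⁺; b⁺) ≤ L(u, h; b) − c₁‖u⁺ − u‖₂² − c₂‖h⁺ − h‖₂². -/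

import Mathlib

open Finset Filter

noncomputable def gradX (m n : ℕ) (u : Fin m → Fin n → ℝ) : Fin m → Fin n → ℝ :=
  fun i j => if h : (i : ℕ) + 1 < m then u ⟨(i : ℕ) + 1, h⟩ j - u i j else 0

noncomputable def gradY (m n : ℕ) (u : Fin m → Fin n → ℝ) : Fin m → Fin n → ℝ :=
  fun i j => if h : (j : ℕ) + 1 < n then u i ⟨(j : ℕ) + 1, h⟩ - u i j else 0

/-- The discrete forward-difference gradient operator `∇`. -/
noncomputable def grad (m n : ℕ) (u : Fin m → Fin n → ℝ) :
    (Fin m → Fin n → ℝ) × (Fin m → Fin n → ℝ) :=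
  (gradX m n u, gradY m n u)

/-- Squared Euclidean norm on `ℝ^{m×n}`. -/
noncomputable def mnorm2sq (m n : ℕ) (u : Fin m → Fin n → ℝ) : ℝ :=
  ∑ i, ∑ j, (u i j) ^ 2

/-- Euclidean norm on `ℝ^{m×n}`. -/
noncomputable def mnorm2 (m n : ℕ) (u : Fin m → Fin n → ℝ) : ℝ :=
  Real.sqrt (mnorm2sq m n u)

/-- Euclidean inner product on `ℝ^{m×n}`. -/
noncomputable def minner (m n : ℕ) (u v : Fin m → Fin n → ℝ) : ℝ :=
  ∑ i, ∑ j, u i j * v i j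

/-- Squared Euclidean norm on `ℝ^{m×n} × ℝ^{m×n}`. -/
noncomputable def pnorm2sq (m n : ℕ)
    (h : (Fin m → Fin n → ℝ) × (Fin m → Fin n → ℝ)) : ℝ :=
  mnorm2sq m n h.1 + mnorm2sq m n h.2

/-- Euclidean norm on `ℝ^{m×n} × ℝ^{m×n}`. -/
noncomputable def pnorm2 (m n : ℕ)
    (h : (Fin m → Fin n → ℝ) × (Fin m → Fin n → ℝ)) : ℝ :=
  Real.sqrt (pnorm2sq m n h)

/-- Euclidean inner product on `ℝ^{m×n} × ℝ^{m×n}`. -/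
noncomputable def pinner (m n : ℕ)
    (h g : (Fin m → Fin n → ℝ) × (Fin m → Fin n → ℝ)) : ℝ :=
  minner m n h.1 g.1 + minner m n h.2 g.2

/-- `‖∇u‖₁`, the (anisotropic) ℓ¹ norm of the discrete gradient. -/
noncomputable def gradL1 (m n : ℕ) (u : Fin m → Fin n → ℝ) : ℝ :=
  ∑ i, ∑ j, (|gradX m n u i j| + |gradY m n u i j|)

/-- View `u ∈ ℝ^{m×n}` as a vector in `ℝ^{mn}`. -/
noncomputable def flatten (m n : ℕ) (u : Fin m → Fin n → ℝ) : Fin m × Fin n → ℝ :=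
  fun ij => u ij.1 ij.2

/-- Squared Euclidean norm on `ℝ^p`. -/
noncomputable def vnorm2sq (p : ℕ) (v : Fin p → ℝ) : ℝ := ∑ k, (v k) ^ 2

/-- The augmented Lagrangian of the unconstrained `L₁/L₂` model:
`L(u, h; b) = ‖∇u‖₁/‖h‖₂ + (λ/2)‖Au − f‖₂² + ρ₂⟨b, ∇u − h⟩ + (ρ₂/2)‖h − ∇u‖₂²`. -/
noncomputable def augL (m n p : ℕ) (A : Matrix (Fin p) (Fin m × Fin n) ℝ) (f : Fin p → ℝ)
    (lam ρ₂ : ℝ) (u : Fin m → Fin n → ℝ)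
    (h b : (Fin m → Fin n → ℝ) × (Fin m → Fin n → ℝ)) : ℝ :=
  gradL1 m n u / pnorm2 m n h
    + lam / 2 * vnorm2sq p (A.mulVec (flatten m n u) - f)
    + ρ₂ * pinner m n b (grad m n u - h)
    + ρ₂ / 2 * pnorm2sq m n (h - grad m n u)

/-- Adjoint of `gradX` with respect to the Euclidean inner products. -/
noncomputable def gradTX (m n : ℕ) (q : Fin m → Fin n → ℝ) : Fin m → Fin n → ℝ :=
  fun i j =>
    (if 0 < (i : ℕ) then
        q ⟨(i : ℕ) - 1, Nat.lt_of_le_of_lt (Nat.sub_le _ _) i.isLt⟩ j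
      else 0)
      - (if (i : ℕ) + 1 < m then q i j else 0)

/-- Adjoint of `gradY` with respect to the Euclidean inner products. -/
noncomputable def gradTY (m n : ℕ) (q : Fin m → Fin n → ℝ) : Fin m → Fin n → ℝ :=
  fun i j =>
    (if 0 < (j : ℕ) then
        q i ⟨(j : ℕ) - 1, Nat.lt_of_le_of_lt (Nat.sub_le _ _) j.isLt⟩
      else 0)
      - (if (j : ℕ) + 1 < n then q i j else 0)

/-- `∇ᵀ`, the adjoint of the discrete gradient operator. -/
noncomputable def gradAdj (m n : ℕ)
    (h : (Fin m → Fin n → ℝ) × (Fin m → Fin n → ℝ)) : Fin m → Fin n → ℝ :=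
  fun i j => gradTX m n h.1 i j + gradTY m n h.2 i j

section PartA
variable {m n : ℕ}

lemma minner_comm' (x y : Fin m → Fin n → ℝ) : minner m n x y = minner m n y x := by
  unfold minner; congr 1; funext i; congr 1; funext j; ring

lemma pinner_comm' (x y : (Fin m → Fin n → ℝ) × (Fin m → Fin n → ℝ)) :
    pinner m n x y = pinner m n y x := by
  unfold pinner; rw [minner_comm', minner_comm' x.2]

lemma minner_add_left (x y z : Fin m → Fin n → ℝ) :
    minner m n (x + y) z = minner m n x z + minner m n y z := by
  unfold minner
  rw [← Finset.sum_add_distrib]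
  refine Finset.sum_congr rfl fun i _ => ?_
  rw [← Finset.sum_add_distrib]
  refine Finset.sum_congr rfl fun j _ => ?_
  simp [add_mul]

lemma minner_smul_left (r : ℝ) (x z : Fin m → Fin n → ℝ) :
    minner m n (r • x) z = r * minner m n x z := by
  unfold minner
  rw [Finset.mul_sum]
  refine Finset.sum_congr rfl fun i _ => ?_
  rw [Finset.mul_sum]
  refine Finset.sum_congr rfl fun j _ => ?_
  simp [smul_eq_mul]; ring

lemma pinner_add_left (x y z : (Fin m → Fin n → ℝ) × (Fin m → Fin n → ℝ)) :
    pinner m n (x + y) z = pinner m n x z + pinner m n y z := by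
  unfold pinner
  show minner m n (x.1 + y.1) z.1 + minner m n (x.2 + y.2) z.2 = _
  rw [minner_add_left, minner_add_left]; ring

lemma pinner_smul_left (r : ℝ) (x z : (Fin m → Fin n → ℝ) × (Fin m → Fin n → ℝ)) :
    pinner m n (r • x) z = r * pinner m n x z := by
  unfold pinner
  show minner m n (r • x.1) z.1 + minner m n (r • x.2) z.2 = _
  rw [minner_smul_left, minner_smul_left]; ring

lemma pinner_add_right (x y z : (Fin m → Fin n → ℝ) × (Fin m → Fin n → ℝ)) :
    pinner m n x (y + z) = pinner m n x y + pinner m n x z := by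
  rw [pinner_comm', pinner_add_left, pinner_comm' y, pinner_comm' z]

lemma pinner_smul_right (r : ℝ) (x z : (Fin m → Fin n → ℝ) × (Fin m → Fin n → ℝ)) :
    pinner m n x (r • z) = r * pinner m n x z := by
  rw [pinner_comm', pinner_smul_left, pinner_comm']

lemma pinner_neg_left (x z : (Fin m → Fin n → ℝ) × (Fin m → Fin n → ℝ)) :
    pinner m n (-x) z = - pinner m n x z := by
  have := pinner_smul_left (-1) x z
  simpa using this

lemma pinner_sub_left (x y z : (Fin m → Fin n → ℝ) × (Fin m → Fin n → ℝ)) :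
    pinner m n (x - y) z = pinner m n x z - pinner m n y z := by
  rw [sub_eq_add_neg, pinner_add_left, pinner_neg_left]; ring

lemma pinner_sub_right (x y z : (Fin m → Fin n → ℝ) × (Fin m → Fin n → ℝ)) :
    pinner m n x (y - z) = pinner m n x y - pinner m n x z := by
  rw [pinner_comm', pinner_sub_left, pinner_comm' y, pinner_comm' z]

lemma pinner_self (x : (Fin m → Fin n → ℝ) × (Fin m → Fin n → ℝ)) :
    pinner m n x x = pnorm2sq m n x := by
  unfold pinner pnorm2sq minner mnorm2sq
  congr 1 <;> (refine Finset.sum_congr rfl fun i _ => ?_) <;>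
    (refine Finset.sum_congr rfl fun j _ => ?_) <;> ring

lemma mnorm2sq_nonneg (x : Fin m → Fin n → ℝ) : 0 ≤ mnorm2sq m n x := by
  unfold mnorm2sq; positivity

lemma pnorm2sq_nonneg (x : (Fin m → Fin n → ℝ) × (Fin m → Fin n → ℝ)) :
    0 ≤ pnorm2sq m n x := by
  unfold pnorm2sq; have := mnorm2sq_nonneg (m := m) (n := n) x.1
  have := mnorm2sq_nonneg (m := m) (n := n) x.2; linarith

lemma pnorm2_nonneg (x : (Fin m → Fin n → ℝ) × (Fin m → Fin n → ℝ)) :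
    0 ≤ pnorm2 m n x := Real.sqrt_nonneg _

lemma pnorm2_sq (x : (Fin m → Fin n → ℝ) × (Fin m → Fin n → ℝ)) :
    pnorm2 m n x ^ 2 = pnorm2sq m n x := Real.sq_sqrt (pnorm2sq_nonneg x)

lemma mnorm2sq_eq_zero {x : Fin m → Fin n → ℝ} (h : mnorm2sq m n x = 0) : x = 0 := by
  funext i j
  have h1 : ∀ i ∈ Finset.univ (α := Fin m), (0:ℝ) ≤ ∑ j, (x i j)^2 := by
    intro i _; positivity
  have h2 : (∑ j, (x i j)^2) ≤ mnorm2sq m n x := Finset.single_le_sum h1 (Finset.mem_univ i)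
  have h3 : ∀ j ∈ Finset.univ (α := Fin n), (0:ℝ) ≤ (x i j)^2 := by intro j _; positivity
  have h4 : (x i j)^2 ≤ ∑ j, (x i j)^2 := Finset.single_le_sum h3 (Finset.mem_univ j)
  have : (x i j)^2 = 0 := le_antisymm (by rw [← h]; linarith) (by positivity)
  simpa using pow_eq_zero_iff (n := 2) (by norm_num) |>.mp this

lemma pnorm2sq_eq_zero {x : (Fin m → Fin n → ℝ) × (Fin m → Fin n → ℝ)}
    (h : pnorm2sq m n x = 0) : x = 0 := by
  unfold pnorm2sq at h
  have h1 := mnorm2sq_nonneg (m := m) (n := n) x.1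
  have h2 := mnorm2sq_nonneg (m := m) (n := n) x.2
  have e1 : x.1 = 0 := mnorm2sq_eq_zero (by linarith)
  have e2 : x.2 = 0 := mnorm2sq_eq_zero (by linarith)
  exact Prod.ext e1 e2

lemma pnorm2sq_pos {x : (Fin m → Fin n → ℝ) × (Fin m → Fin n → ℝ)} (hx : x ≠ 0) :
    0 < pnorm2sq m n x :=
  lt_of_le_of_ne (pnorm2sq_nonneg x) (fun h => hx (pnorm2sq_eq_zero h.symm))

lemma pnorm2sq_add (x y : (Fin m → Fin n → ℝ) × (Fin m → Fin n → ℝ)) :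
    pnorm2sq m n (x + y) = pnorm2sq m n x + 2 * pinner m n x y + pnorm2sq m n y := by
  rw [← pinner_self, pinner_add_left, pinner_add_right, pinner_add_right,
    pinner_self, pinner_self, pinner_comm' y x]; ring

lemma pnorm2sq_sub (x y : (Fin m → Fin n → ℝ) × (Fin m → Fin n → ℝ)) :
    pnorm2sq m n (x - y) = pnorm2sq m n x - 2 * pinner m n x y + pnorm2sq m n y := by
  rw [← pinner_self, pinner_sub_left, pinner_sub_right, pinner_sub_right,
    pinner_self, pinner_self, pinner_comm' y x]; ring

lemma pnorm2sq_smul (r : ℝ) (x : (Fin m → Fin n → ℝ) × (Fin m → Fin n → ℝ)) :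
    pnorm2sq m n (r • x) = r^2 * pnorm2sq m n x := by
  rw [← pinner_self, pinner_smul_left, pinner_smul_right, pinner_self]; ring

lemma abs_pinner_le (x y : (Fin m → Fin n → ℝ) × (Fin m → Fin n → ℝ)) :
    |pinner m n x y| ≤ pnorm2 m n x * pnorm2 m n y := by
  set A := pnorm2sq m n x with hA
  set C := pnorm2sq m n y with hC
  set B := pinner m n x y with hB
  have key : B^2 ≤ A * C := by
    rcases eq_or_lt_of_le (pnorm2sq_nonneg y) with hc | hc
    · have : y = 0 := pnorm2sq_eq_zero hc.symm
      have : B = 0 := by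
        rw [hB, this, show (0 : (Fin m → Fin n → ℝ) × (Fin m → Fin n → ℝ)) = (0:ℝ) • 0 by simp,
          pinner_smul_right]; ring
      rw [this]; simp [hA]
      nlinarith [pnorm2sq_nonneg x, pnorm2sq_nonneg y]
    · have h0 : 0 ≤ pnorm2sq m n (C • x - B • y) := pnorm2sq_nonneg _
      rw [pnorm2sq_sub, pnorm2sq_smul, pnorm2sq_smul, pinner_smul_left, pinner_smul_right] at h0
      rw [← hA, ← hC, ← hB] at h0
      nlinarith
  calc |B| = Real.sqrt (B^2) := (Real.sqrt_sq_eq_abs B).symm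
    _ ≤ Real.sqrt (A * C) := Real.sqrt_le_sqrt key
    _ = Real.sqrt A * Real.sqrt C := Real.sqrt_mul (pnorm2sq_nonneg x) _
    _ = pnorm2 m n x * pnorm2 m n y := rfl

lemma pnorm2sq_add_le (x y : (Fin m → Fin n → ℝ) × (Fin m → Fin n → ℝ)) :
    pnorm2sq m n (x + y) ≤ 2 * pnorm2sq m n x + 2 * pnorm2sq m n y := by
  have h := pnorm2sq_nonneg (x - y)
  rw [pnorm2sq_sub] at h
  rw [pnorm2sq_add]; linarith

lemma pnorm2sq_neg (x : (Fin m → Fin n → ℝ) × (Fin m → Fin n → ℝ)) :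
    pnorm2sq m n (-x) = pnorm2sq m n x := by
  have : (-x) = (-1 : ℝ) • x := by simp
  rw [this, pnorm2sq_smul]; ring

end PartA

section PartB
variable {m n : ℕ}

lemma sum2_add (G H : Fin m → Fin n → ℝ) :
    ∑ i, ∑ j, (G i j + H i j) = (∑ i, ∑ j, G i j) + ∑ i, ∑ j, H i j := by
  rw [← Finset.sum_add_distrib]
  exact Finset.sum_congr rfl fun i _ => by rw [← Finset.sum_add_distrib]

lemma sum2_sub (G H : Fin m → Fin n → ℝ) :
    ∑ i, ∑ j, (G i j - H i j) = (∑ i, ∑ j, G i j) - ∑ i, ∑ j, H i j := by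
  rw [← Finset.sum_sub_distrib]
  exact Finset.sum_congr rfl fun i _ => by rw [← Finset.sum_sub_distrib]

lemma sum2_div (G : Fin m → Fin n → ℝ) (c : ℝ) :
    ∑ i, ∑ j, G i j / c = (∑ i, ∑ j, G i j) / c := by
  rw [Finset.sum_div]
  exact Finset.sum_congr rfl fun i _ => by rw [Finset.sum_div]

lemma sum2_le {G H : Fin m → Fin n → ℝ} (h : ∀ i j, G i j ≤ H i j) :
    ∑ i, ∑ j, G i j ≤ ∑ i, ∑ j, H i j :=
  Finset.sum_le_sum fun i _ => Finset.sum_le_sum fun j _ => h i j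

lemma abs_sum2_le (G : Fin m → Fin n → ℝ) :
    |∑ i, ∑ j, G i j| ≤ ∑ i, ∑ j, |G i j| := by
  calc |∑ i, ∑ j, G i j| ≤ ∑ i, |∑ j, G i j| := Finset.abs_sum_le_sum_abs _ _
    _ ≤ ∑ i, ∑ j, |G i j| :=
        Finset.sum_le_sum fun i _ => Finset.abs_sum_le_sum_abs _ _

lemma gradX_lin (a b : ℝ) (x y : Fin m → Fin n → ℝ) (i : Fin m) (j : Fin n) :
    gradX m n (a • x + b • y) i j = a * gradX m n x i j + b * gradX m n y i j := by
  unfold gradX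
  by_cases h : (i : ℕ) + 1 < m <;> simp [h, smul_eq_mul] <;> ring

lemma gradY_lin (a b : ℝ) (x y : Fin m → Fin n → ℝ) (i : Fin m) (j : Fin n) :
    gradY m n (a • x + b • y) i j = a * gradY m n x i j + b * gradY m n y i j := by
  unfold gradY
  by_cases h : (j : ℕ) + 1 < n <;> simp [h, smul_eq_mul] <;> ring

lemma smul_add_eq (a b : ℝ) (x y : Fin m → Fin n → ℝ) (hx : a • x + b • y = a • x + b • y) :
    True := trivial

lemma gradX_sub (x y : Fin m → Fin n → ℝ) (i : Fin m) (j : Fin n) :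
    gradX m n (x - y) i j = gradX m n x i j - gradX m n y i j := by
  have h : x - y = (1:ℝ) • x + (-1:ℝ) • y := by funext a b; simp [sub_eq_add_neg]
  rw [h, gradX_lin]; ring

lemma gradY_sub (x y : Fin m → Fin n → ℝ) (i : Fin m) (j : Fin n) :
    gradY m n (x - y) i j = gradY m n x i j - gradY m n y i j := by
  have h : x - y = (1:ℝ) • x + (-1:ℝ) • y := by funext a b; simp [sub_eq_add_neg]
  rw [h, gradY_lin]; ring

lemma grad_lin (a b : ℝ) (x y : Fin m → Fin n → ℝ) :
    grad m n (a • x + b • y) = a • grad m n x + b • grad m n y := by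
  refine Prod.ext ?_ ?_ <;> funext i j
  · have h2 : (a • grad m n x + b • grad m n y).1 i j
        = a * gradX m n x i j + b * gradX m n y i j := by
      simp [grad, smul_eq_mul]
    rw [h2]; exact gradX_lin a b x y i j
  · have h2 : (a • grad m n x + b • grad m n y).2 i j
        = a * gradY m n x i j + b * gradY m n y i j := by
      simp [grad, smul_eq_mul]
    rw [h2]; exact gradY_lin a b x y i j

lemma grad_sub (x y : Fin m → Fin n → ℝ) :
    grad m n (x - y) = grad m n x - grad m n y := by
  have h : x - y = (1:ℝ) • x + (-1:ℝ) • y := by funext a b; simp [sub_eq_add_neg]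
  rw [h, grad_lin]
  refine Prod.ext ?_ ?_ <;> funext i j <;> simp [sub_eq_add_neg]

lemma grad_smul (r : ℝ) (x : Fin m → Fin n → ℝ) :
    grad m n (r • x) = r • grad m n x := by
  have h : r • x = r • x + (0:ℝ) • x := by funext i j; simp
  rw [h, grad_lin]
  refine Prod.ext ?_ ?_ <;> funext i j <;> simp

lemma flatten_smul (r : ℝ) (x : Fin m → Fin n → ℝ) :
    flatten m n (r • x) = r • flatten m n x := by
  funext ij; simp [flatten]

lemma flatten_add (x y : Fin m → Fin n → ℝ) :
    flatten m n (x + y) = flatten m n x + flatten m n y := by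
  funext ij; simp [flatten]

lemma flatten_sub (x y : Fin m → Fin n → ℝ) :
    flatten m n (x - y) = flatten m n x - flatten m n y := by
  funext ij; simp [flatten]

lemma gradL1_nonneg (v : Fin m → Fin n → ℝ) : 0 ≤ gradL1 m n v := by
  unfold gradL1
  refine Finset.sum_nonneg fun i _ => Finset.sum_nonneg fun j _ => ?_
  positivity

lemma gradL1_mid_le (x y : Fin m → Fin n → ℝ) :
    gradL1 m n ((2⁻¹ : ℝ) • (x + y)) ≤ (gradL1 m n x + gradL1 m n y) / 2 := by
  have hx : (2⁻¹:ℝ) • (x + y) = (2⁻¹:ℝ) • x + (2⁻¹:ℝ) • y := by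
    funext a b; simp; ring
  unfold gradL1
  calc ∑ i, ∑ j, (|gradX m n ((2⁻¹:ℝ) • (x+y)) i j| + |gradY m n ((2⁻¹:ℝ) • (x+y)) i j|)
      ≤ ∑ i, ∑ j, (((|gradX m n x i j| + |gradY m n x i j|)
          + (|gradX m n y i j| + |gradY m n y i j|)) / 2) := by
        refine sum2_le fun i j => ?_
        rw [hx, gradX_lin, gradY_lin]
        have e : ∀ (a b : ℝ), |2⁻¹*a + 2⁻¹*b| ≤ (|a| + |b|)/2 := by
          intro a b
          have h := abs_add_le (2⁻¹*a) (2⁻¹*b)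
          rw [abs_mul, abs_mul, abs_of_pos (show (0:ℝ) < 2⁻¹ by norm_num)] at h
          linarith
        have e1 := e (gradX m n x i j) (gradX m n y i j)
        have e2 := e (gradY m n x i j) (gradY m n y i j)
        linarith
    _ = (gradL1 m n x + gradL1 m n y) / 2 := by
        rw [sum2_div]
        unfold gradL1
        rw [sum2_add]

lemma gradL1_abs_sub (x y : Fin m → Fin n → ℝ) :
    |gradL1 m n x - gradL1 m n y| ≤ gradL1 m n (x - y) := by
  unfold gradL1
  rw [← sum2_sub]
  calc |∑ i, ∑ j, ((|gradX m n x i j| + |gradY m n x i j|)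
        - (|gradX m n y i j| + |gradY m n y i j|))|
      ≤ ∑ i, ∑ j, |(|gradX m n x i j| + |gradY m n x i j|)
        - (|gradX m n y i j| + |gradY m n y i j|)| := abs_sum2_le _
    _ ≤ ∑ i, ∑ j, (|gradX m n (x-y) i j| + |gradY m n (x-y) i j|) := by
        refine sum2_le fun i j => ?_
        rw [gradX_sub, gradY_sub]
        have k1 := abs_abs_sub_abs_le_abs_sub (gradX m n x i j) (gradX m n y i j)
        have k2 := abs_abs_sub_abs_le_abs_sub (gradY m n x i j) (gradY m n y i j)
        have k1' := abs_le.mp k1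
        have k2' := abs_le.mp k2
        refine abs_le.mpr ⟨by linarith [k1'.1, k2'.1], by linarith [k1'.2, k2'.2]⟩
    _ = _ := rfl

lemma entry_le_sqrt (v : Fin m → Fin n → ℝ) (i : Fin m) (j : Fin n) :
    |v i j| ≤ Real.sqrt (mnorm2sq m n v) := by
  have h1 : ∀ i ∈ Finset.univ (α := Fin m), (0:ℝ) ≤ ∑ j, (v i j)^2 := by
    intro i _; positivity
  have h2 : (∑ j, (v i j)^2) ≤ mnorm2sq m n v := Finset.single_le_sum h1 (Finset.mem_univ i)
  have h3 : ∀ j ∈ Finset.univ (α := Fin n), (0:ℝ) ≤ (v i j)^2 := by intro j _; positivity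
  have h4 : (v i j)^2 ≤ ∑ j, (v i j)^2 := Finset.single_le_sum h3 (Finset.mem_univ j)
  calc |v i j| = Real.sqrt ((v i j)^2) := (Real.sqrt_sq_eq_abs _).symm
    _ ≤ Real.sqrt (mnorm2sq m n v) := Real.sqrt_le_sqrt (by linarith)

lemma gradL1_le_sqrt (v : Fin m → Fin n → ℝ) :
    gradL1 m n v ≤ 4 * (m:ℝ) * n * Real.sqrt (mnorm2sq m n v) := by
  set S := Real.sqrt (mnorm2sq m n v) with hS
  have hS0 : 0 ≤ S := Real.sqrt_nonneg _
  have hgx : ∀ i j, |gradX m n v i j| ≤ 2 * S := by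
    intro i j
    unfold gradX
    by_cases h : (i:ℕ) + 1 < m
    · simp only [h, dif_pos]
      have := entry_le_sqrt v ⟨(i:ℕ)+1, h⟩ j
      have := entry_le_sqrt v i j
      have := abs_sub (v ⟨(i:ℕ)+1, h⟩ j) (v i j)
      calc |v ⟨(i:ℕ)+1, h⟩ j - v i j| ≤ |v ⟨(i:ℕ)+1, h⟩ j| + |v i j| := abs_sub _ _
        _ ≤ 2 * S := by
            have := entry_le_sqrt v ⟨(i:ℕ)+1, h⟩ j
            have := entry_le_sqrt v i j
            linarith
    · simp only [h, dif_neg, not_false_iff]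
      rw [abs_zero]; linarith
  have hgy : ∀ i j, |gradY m n v i j| ≤ 2 * S := by
    intro i j
    unfold gradY
    by_cases h : (j:ℕ) + 1 < n
    · simp only [h, dif_pos]
      calc |v i ⟨(j:ℕ)+1, h⟩ - v i j| ≤ |v i ⟨(j:ℕ)+1, h⟩| + |v i j| := abs_sub _ _
        _ ≤ 2 * S := by
            have := entry_le_sqrt v i ⟨(j:ℕ)+1, h⟩
            have := entry_le_sqrt v i j
            linarith
    · simp only [h, dif_neg, not_false_iff]
      rw [abs_zero]; linarith
  unfold gradL1
  calc ∑ i, ∑ j, (|gradX m n v i j| + |gradY m n v i j|)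
      ≤ ∑ i : Fin m, ∑ j : Fin n, 4 * S := by
        refine sum2_le fun i j => ?_
        have := hgx i j; have := hgy i j; linarith
    _ = 4 * (m:ℝ) * n * S := by
        simp [Finset.sum_const, Finset.card_univ]
        ring

end PartB

section PartC
variable {m n p : ℕ}

lemma vnorm2sq_nonneg (v : Fin p → ℝ) : 0 ≤ vnorm2sq p v := by
  unfold vnorm2sq; positivity

lemma vnorm2sq_eq_zero {v : Fin p → ℝ} (h : vnorm2sq p v = 0) : v = 0 := by
  funext k
  have h3 : ∀ k ∈ Finset.univ (α := Fin p), (0:ℝ) ≤ (v k)^2 := by intro k _; positivity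
  have h4 : (v k)^2 ≤ vnorm2sq p v := Finset.single_le_sum h3 (Finset.mem_univ k)
  have : (v k)^2 = 0 := le_antisymm (by rw [h] at h4; exact h4) (by positivity)
  simpa using pow_eq_zero_iff (n := 2) (by norm_num) |>.mp this

lemma vnorm2sq_smul (r : ℝ) (v : Fin p → ℝ) : vnorm2sq p (r • v) = r^2 * vnorm2sq p v := by
  unfold vnorm2sq
  rw [Finset.mul_sum]
  refine Finset.sum_congr rfl fun k _ => ?_
  simp [smul_eq_mul]; ring

lemma mnorm2sq_smul (r : ℝ) (v : Fin m → Fin n → ℝ) :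
    mnorm2sq m n (r • v) = r^2 * mnorm2sq m n v := by
  unfold mnorm2sq
  rw [Finset.mul_sum]
  refine Finset.sum_congr rfl fun i _ => ?_
  rw [Finset.mul_sum]
  refine Finset.sum_congr rfl fun j _ => ?_
  simp [smul_eq_mul]; ring

lemma continuous_gradX_entry (i : Fin m) (j : Fin n) :
    Continuous (fun v : Fin m → Fin n → ℝ => gradX m n v i j) := by
  unfold gradX
  by_cases h : (i:ℕ) + 1 < m
  · simp only [h, dif_pos]
    fun_prop
  · simp only [h, dif_neg, not_false_iff]
    exact continuous_const

lemma continuous_gradY_entry (i : Fin m) (j : Fin n) :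
    Continuous (fun v : Fin m → Fin n → ℝ => gradY m n v i j) := by
  unfold gradY
  by_cases h : (j:ℕ) + 1 < n
  · simp only [h, dif_pos]
    fun_prop
  · simp only [h, dif_neg, not_false_iff]
    exact continuous_const

lemma continuous_mnorm2sq : Continuous (fun v : Fin m → Fin n → ℝ => mnorm2sq m n v) := by
  unfold mnorm2sq
  refine continuous_finset_sum _ fun i _ => continuous_finset_sum _ fun j _ => ?_
  fun_prop

/-- The coercivity constant. -/
lemma exists_alpha (hm : 0 < m) (hn : 0 < n) (A : Matrix (Fin p) (Fin m × Fin n) ℝ)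
    (lam : ℝ) (hlam : 0 < lam)
    (hker : ∀ v : Fin m → Fin n → ℝ,
      A.mulVec (flatten m n v) = 0 → grad m n v = 0 → v = 0) :
    ∃ α : ℝ, 0 < α ∧ ∀ v : Fin m → Fin n → ℝ,
      α * mnorm2sq m n v ≤ lam * vnorm2sq p (A.mulVec (flatten m n v))
        + lam * pnorm2sq m n (grad m n v) := by
  set g : (Fin m → Fin n → ℝ) → ℝ := fun v =>
    lam * vnorm2sq p (A.mulVec (flatten m n v)) + lam * pnorm2sq m n (grad m n v) with hg
  have hgcont : Continuous g := by
    refine ((continuous_const.mul ?_).add (continuous_const.mul ?_))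
    · unfold vnorm2sq Matrix.mulVec dotProduct flatten
      refine continuous_finset_sum _ fun k _ => ?_
      refine Continuous.pow ?_ 2
      refine continuous_finset_sum _ fun ij _ => ?_
      fun_prop
    · unfold pnorm2sq grad
      refine Continuous.add ?_ ?_
      · unfold mnorm2sq
        refine continuous_finset_sum _ fun i _ => continuous_finset_sum _ fun j _ => ?_
        exact (continuous_gradX_entry i j).pow 2
      · unfold mnorm2sq
        refine continuous_finset_sum _ fun i _ => continuous_finset_sum _ fun j _ => ?_
        exact (continuous_gradY_entry i j).pow 2
  have hgnn : ∀ v, 0 ≤ g v := by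
    intro v
    have e : g v = lam * vnorm2sq p (A.mulVec (flatten m n v))
        + lam * pnorm2sq m n (grad m n v) := rfl
    rw [e]
    have h1 := mul_nonneg hlam.le (vnorm2sq_nonneg (A.mulVec (flatten m n v)))
    have h2 := mul_nonneg hlam.le (pnorm2sq_nonneg (grad m n v))
    linarith
  have hgpos : ∀ v : Fin m → Fin n → ℝ, v ≠ 0 → 0 < g v := by
    intro v hv
    rcases lt_or_eq_of_le (hgnn v) with h | h
    · exact h
    · exfalso
      have e : g v = lam * vnorm2sq p (A.mulVec (flatten m n v))
          + lam * pnorm2sq m n (grad m n v) := rfl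
      rw [e] at h
      have ha := mul_nonneg hlam.le (vnorm2sq_nonneg (A.mulVec (flatten m n v)))
      have hb := mul_nonneg hlam.le (pnorm2sq_nonneg (grad m n v))
      have h1' : lam * vnorm2sq p (A.mulVec (flatten m n v)) = 0 := by linarith
      have h2' : lam * pnorm2sq m n (grad m n v) = 0 := by linarith
      have h1 : vnorm2sq p (A.mulVec (flatten m n v)) = 0 :=
        (mul_eq_zero.mp h1').resolve_left (ne_of_gt hlam)
      have h2 : pnorm2sq m n (grad m n v) = 0 :=
        (mul_eq_zero.mp h2').resolve_left (ne_of_gt hlam)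
      exact hv (hker v (vnorm2sq_eq_zero h1) (pnorm2sq_eq_zero h2))
  -- the unit sphere
  set S : Set (Fin m → Fin n → ℝ) := {v | mnorm2sq m n v = 1} with hSdef
  have hSne : S.Nonempty := by
    refine ⟨fun i j => if i = ⟨0, hm⟩ ∧ j = ⟨0, hn⟩ then 1 else 0, ?_⟩
    show mnorm2sq m n _ = 1
    unfold mnorm2sq
    have : ∀ i : Fin m, (∑ j : Fin n, ((if i = ⟨0,hm⟩ ∧ j = ⟨0,hn⟩ then (1:ℝ) else 0))^2)
        = if i = ⟨0,hm⟩ then 1 else 0 := by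
      intro i
      by_cases hi : i = ⟨0, hm⟩ <;> simp [hi, ite_and]
    rw [Finset.sum_congr rfl (fun i _ => this i)]
    simp
  have hScompact : IsCompact S := by
    refine Metric.isCompact_of_isClosed_isBounded ?_ ?_
    · exact isClosed_eq continuous_mnorm2sq continuous_const
    · rw [isBounded_iff_forall_norm_le]
      refine ⟨1, fun v hv => ?_⟩
      rw [pi_norm_le_iff_of_nonneg (by norm_num)]
      intro i
      rw [pi_norm_le_iff_of_nonneg (by norm_num)]
      intro j
      rw [Real.norm_eq_abs]
      have h2 : (v i j)^2 ≤ 1 := by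
        have hv' : mnorm2sq m n v = 1 := hv
        have h1 : ∀ i ∈ Finset.univ (α := Fin m), (0:ℝ) ≤ ∑ j, (v i j)^2 := by
          intro i _; positivity
        have h2 : (∑ j, (v i j)^2) ≤ mnorm2sq m n v := Finset.single_le_sum h1 (Finset.mem_univ i)
        have h3 : ∀ j ∈ Finset.univ (α := Fin n), (0:ℝ) ≤ (v i j)^2 := by intro j _; positivity
        have h4 : (v i j)^2 ≤ ∑ j, (v i j)^2 := Finset.single_le_sum h3 (Finset.mem_univ j)
        rw [hv'] at h2; linarith
      nlinarith [abs_nonneg (v i j), sq_abs (v i j)]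
  obtain ⟨v₀, hv₀S, hv₀min⟩ := hScompact.exists_isMinOn hSne hgcont.continuousOn
  refine ⟨g v₀, ?_, ?_⟩
  · refine hgpos v₀ ?_
    intro h0
    have : mnorm2sq m n v₀ = 1 := hv₀S
    rw [h0] at this
    unfold mnorm2sq at this
    simp at this
  · intro v
    by_cases hv : v = 0
    · subst hv
      have h0 : mnorm2sq m n (0 : Fin m → Fin n → ℝ) = 0 := by unfold mnorm2sq; simp
      rw [h0, mul_zero]
      exact hgnn 0
    · have hpos : 0 < mnorm2sq m n v := by
        rcases lt_or_eq_of_le (mnorm2sq_nonneg (m := m) (n := n) v) with h | h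
        · exact h
        · exact absurd (mnorm2sq_eq_zero h.symm) hv
      set t : ℝ := Real.sqrt (mnorm2sq m n v) with ht
      have ht0 : 0 < t := Real.sqrt_pos.mpr hpos
      have ht2 : t^2 = mnorm2sq m n v := Real.sq_sqrt hpos.le
      have hw : mnorm2sq m n (t⁻¹ • v) = 1 := by
        rw [mnorm2sq_smul, ← ht2]
        field_simp
      have hmem : (t⁻¹ • v) ∈ S := hw
      have hmin := hv₀min hmem
      have hgw : g (t⁻¹ • v) = t⁻¹^2 * g v := by
        rw [hg]
        simp only
        rw [flatten_smul, Matrix.mulVec_smul, vnorm2sq_smul, grad_smul, pnorm2sq_smul]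
        ring
      have : g v₀ ≤ t⁻¹^2 * g v := by rw [← hgw]; exact hmin
      have hfin : g v₀ * mnorm2sq m n v ≤ g v := by
        rw [← ht2]
        have := mul_le_mul_of_nonneg_right this (le_of_lt (by positivity : (0:ℝ) < t^2))
        calc g v₀ * t^2 ≤ t⁻¹^2 * g v * t^2 := this
          _ = g v := by field_simp
      exact hfin
end PartC

section PartD
variable {m n : ℕ}

/-- Stationarity of the h-subproblem at a local minimizer. -/
lemma stationarity (cP rho : ℝ) (hrho : 0 < rho)
    (w b hP : (Fin m → Fin n → ℝ) × (Fin m → Fin n → ℝ)) (hPne : hP ≠ 0)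
    (hmin : ∀ g : (Fin m → Fin n → ℝ) × (Fin m → Fin n → ℝ), g ≠ 0 →
      cP / pnorm2 m n hP + rho * pinner m n b (w - hP) + rho/2 * pnorm2sq m n (hP - w)
      ≤ cP / pnorm2 m n g + rho * pinner m n b (w - g) + rho/2 * pnorm2sq m n (g - w)) :
    hP - w = b + (cP / (rho * (pnorm2 m n hP)^3)) • hP := by
  set a2 : ℝ := pnorm2sq m n hP with ha2
  set a : ℝ := pnorm2 m n hP with ha
  have ha2pos : 0 < a2 := pnorm2sq_pos hPne
  have hasq : a^2 = a2 := pnorm2_sq hP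
  have hapos : 0 < a := by
    rw [ha]; unfold pnorm2; exact Real.sqrt_pos.mpr ha2pos
  set G : ((Fin m → Fin n → ℝ) × (Fin m → Fin n → ℝ)) → ℝ := fun g =>
    cP / pnorm2 m n g + rho * pinner m n b (w - g) + rho/2 * pnorm2sq m n (g - w) with hG
  have key : ∀ v : (Fin m → Fin n → ℝ) × (Fin m → Fin n → ℝ),
      rho * pinner m n (hP - w) v = rho * pinner m n b v + (cP/a^3) * pinner m n hP v := by
    intro v
    set B0 : ℝ := 2 * pinner m n hP v with hB0
    set C0 : ℝ := pnorm2sq m n v with hC0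
    set q : ℝ → ℝ := fun t => a2 + B0*t + C0*t^2 with hqdef
    have hq : ∀ t : ℝ, pnorm2sq m n (hP + t • v) = q t := by
      intro t
      rw [pnorm2sq_add, pnorm2sq_smul, pinner_smul_right]
      simp only [hqdef, hB0, hC0]; ring
    have hq0 : q 0 = a2 := by simp [hqdef]
    have hq0pos : 0 < q 0 := by rw [hq0]; exact ha2pos
    have hsq0 : Real.sqrt (q 0) = a := by rw [hq0, ha, ha2]; rfl
    -- the one-dimensional function
    set phi : ℝ → ℝ := fun t => cP * (Real.sqrt (q t))⁻¹
      + (rho * pinner m n b (w - hP) - rho * pinner m n b v * t)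
      + (rho/2) * (pnorm2sq m n (hP - w) + 2 * pinner m n (hP - w) v * t + C0 * t^2)
      with hphidef
    have hphieq : ∀ t : ℝ, G (hP + t • v) = phi t := by
      intro t
      have h1 : pinner m n b (w - (hP + t • v))
          = pinner m n b (w - hP) - t * pinner m n b v := by
        rw [pinner_sub_right, pinner_sub_right, pinner_add_right, pinner_smul_right]; ring
      have h2 : hP + t • v - w = (hP - w) + t • v := by abel
      have h3 : pnorm2sq m n (hP + t • v - w)
          = pnorm2sq m n (hP - w) + 2 * pinner m n (hP - w) v * t + C0 * t^2 := by
        rw [h2, pnorm2sq_add, pnorm2sq_smul, pinner_smul_right]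
        simp only [hC0]; ring
      have h4 : pnorm2 m n (hP + t • v) = Real.sqrt (q t) := by
        unfold pnorm2; rw [hq]
      show cP / pnorm2 m n (hP + t • v) + rho * pinner m n b (w - (hP + t • v))
          + rho/2 * pnorm2sq m n (hP + t • v - w) = phi t
      rw [h4, h1, h3, hphidef]
      rw [div_eq_mul_inv]; ring
    -- derivative of phi at 0
    have hQ' : HasDerivAt q B0 0 := by
      have h1 : HasDerivAt (fun _ : ℝ => a2) 0 0 := hasDerivAt_const _ _
      have h2 : HasDerivAt (fun t : ℝ => B0 * t) B0 0 := by
        simpa using (hasDerivAt_id (0:ℝ)).const_mul B0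
      have h3 : HasDerivAt (fun t : ℝ => C0 * t^2) (C0 * (2 * 0)) 0 := by
        have := (hasDerivAt_pow 2 (0:ℝ)).const_mul C0
        simpa using this
      have := (h1.add h2).add h3
      exact this.congr_deriv (by ring)
    have hsqrtne : Real.sqrt (q 0) ≠ 0 := by rw [hsq0]; exact ne_of_gt hapos
    have hsqrt : HasDerivAt (fun t => Real.sqrt (q t)) (1/(2*Real.sqrt (q 0)) * B0) 0 := by
      have := (Real.hasDerivAt_sqrt (ne_of_gt hq0pos)).comp 0 hQ'
      exact this.congr_deriv (by ring)
    have hinv : HasDerivAt (fun t => (Real.sqrt (q t))⁻¹)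
        (-(1/(2*Real.sqrt (q 0)) * B0)/(Real.sqrt (q 0))^2) 0 := hsqrt.inv hsqrtne
    have hd1 : HasDerivAt (fun t => cP * (Real.sqrt (q t))⁻¹)
        (cP * (-(1/(2*a) * B0)/a^2)) 0 := by
      have := hinv.const_mul cP
      rw [hsq0] at this
      convert this using 1
    have hd2 : HasDerivAt (fun t : ℝ => rho * pinner m n b (w - hP) - rho * pinner m n b v * t)
        (-(rho * pinner m n b v)) 0 := by
      have h2 : HasDerivAt (fun t : ℝ => rho * pinner m n b v * t) (rho * pinner m n b v) 0 := by
        simpa using (hasDerivAt_id (0:ℝ)).const_mul (rho * pinner m n b v)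
      simpa using h2.const_sub (rho * pinner m n b (w - hP))
    have hd3 : HasDerivAt (fun t : ℝ => (rho/2) * (pnorm2sq m n (hP - w)
          + 2 * pinner m n (hP - w) v * t + C0 * t^2))
        ((rho/2) * (2 * pinner m n (hP - w) v)) 0 := by
      have h1 : HasDerivAt (fun _ : ℝ => pnorm2sq m n (hP - w)) 0 0 := hasDerivAt_const _ _
      have h2 : HasDerivAt (fun t : ℝ => 2 * pinner m n (hP - w) v * t)
          (2 * pinner m n (hP - w) v) 0 := by
        simpa using (hasDerivAt_id (0:ℝ)).const_mul (2 * pinner m n (hP - w) v)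
      have h3 : HasDerivAt (fun t : ℝ => C0 * t^2) (C0 * (2 * 0)) 0 := by
        simpa using (hasDerivAt_pow 2 (0:ℝ)).const_mul C0
      have := ((h1.add h2).add h3).const_mul (rho/2)
      simpa using this
    have hD : HasDerivAt phi
        (cP * (-(1/(2*a) * B0)/a^2) + (-(rho * pinner m n b v))
          + (rho/2) * (2 * pinner m n (hP - w) v)) 0 := by
      exact (hd1.add hd2).add hd3
    -- local minimum at 0
    have hev : ∀ᶠ t : ℝ in nhds 0, hP + t • v ≠ 0 := by
      have hc : ContinuousAt q 0 := by
        have : Continuous q := by rw [hqdef]; fun_prop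
        exact this.continuousAt
      have hmem := hc.preimage_mem_nhds (Ioi_mem_nhds hq0pos)
      filter_upwards [hmem] with t ht
      intro h0
      have : pnorm2sq m n (hP + t • v) = q t := hq t
      rw [h0] at this
      have hz : pnorm2sq m n (0 : (Fin m → Fin n → ℝ) × (Fin m → Fin n → ℝ)) = 0 := by
        unfold pnorm2sq mnorm2sq; simp
      rw [hz] at this
      have : (0:ℝ) < q t := ht
      linarith [this]
    have hlocal : IsLocalMin phi 0 := by
      have : ∀ᶠ t : ℝ in nhds 0, phi 0 ≤ phi t := by
        filter_upwards [hev] with t ht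
        rw [← hphieq t, ← hphieq 0]
        have h00 : hP + (0:ℝ) • v = hP := by simp
        rw [h00]
        exact hmin _ ht
      exact this
    have hD0 := hlocal.hasDerivAt_eq_zero hD
    -- unravel the scalar equation
    have hane : a ≠ 0 := ne_of_gt hapos
    have e1 : cP * (-(1/(2*a) * B0)/a^2) = -((cP/a^3) * pinner m n hP v) := by
      rw [hB0]; field_simp
    rw [e1] at hD0
    linarith [hD0]
  -- from the directional equations to the vector equation
  have hrhone : rho ≠ 0 := ne_of_gt hrho
  have hZ : ∀ v, pinner m n ((hP - w) - b - (cP/(rho * a^3)) • hP) v = 0 := by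
    intro v
    rw [pinner_sub_left, pinner_sub_left, pinner_smul_left]
    have k := key v
    have e : rho * ((cP/(rho*a^3)) * pinner m n hP v) = (cP/a^3) * pinner m n hP v := by
      field_simp
    have : rho * (pinner m n (hP - w) v - pinner m n b v
        - cP/(rho*a^3) * pinner m n hP v) = 0 := by
      rw [mul_sub, mul_sub, e]; linarith
    exact (mul_eq_zero.mp this).resolve_left hrhone
  have hZ0 : (hP - w) - b - (cP/(rho * a^3)) • hP = 0 := by
    refine pnorm2sq_eq_zero ?_
    rw [← pinner_self]
    exact hZ _
  have : (hP - w) - (b + (cP/(rho * a^3)) • hP) = 0 := by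
    rw [← sub_sub]; exact hZ0
  exact sub_eq_zero.mp this

end PartD

section PartE
variable {m n p : ℕ}

lemma mnorm2sq_sub_comm (x y : Fin m → Fin n → ℝ) :
    mnorm2sq m n (x - y) = mnorm2sq m n (y - x) := by
  have h : x - y = (-1:ℝ) • (y - x) := by funext i j; simp
  rw [h, mnorm2sq_smul]; ring

lemma pnorm2sq_sub_comm (x y : (Fin m → Fin n → ℝ) × (Fin m → Fin n → ℝ)) :
    pnorm2sq m n (x - y) = pnorm2sq m n (y - x) := by
  have h : x - y = -(y - x) := by abel
  rw [h, pnorm2sq_neg]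

lemma vnorm2sq_mid (x y f : Fin p → ℝ) :
    vnorm2sq p ((2⁻¹:ℝ) • (x + y) - f)
      = vnorm2sq p (x - f)/2 + vnorm2sq p (y - f)/2 - vnorm2sq p (x - y)/4 := by
  unfold vnorm2sq
  rw [Finset.sum_div, Finset.sum_div, Finset.sum_div, ← Finset.sum_add_distrib,
    ← Finset.sum_sub_distrib]
  refine Finset.sum_congr rfl fun k _ => ?_
  simp only [Pi.sub_apply, Pi.smul_apply, Pi.add_apply, smul_eq_mul]
  ring

lemma mnorm2sq_mid (h x y : Fin m → Fin n → ℝ) :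
    mnorm2sq m n (h - (2⁻¹:ℝ) • (x + y))
      = mnorm2sq m n (h - x)/2 + mnorm2sq m n (h - y)/2 - mnorm2sq m n (x - y)/4 := by
  unfold mnorm2sq
  rw [← sum2_div, ← sum2_div, ← sum2_div, ← sum2_add, ← sum2_sub]
  refine Finset.sum_congr rfl fun i _ => Finset.sum_congr rfl fun j _ => ?_
  simp only [Pi.sub_apply, Pi.smul_apply, Pi.add_apply, smul_eq_mul]
  ring

lemma pnorm2sq_mid (h x y : (Fin m → Fin n → ℝ) × (Fin m → Fin n → ℝ)) :
    pnorm2sq m n (h - (2⁻¹:ℝ) • (x + y))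
      = pnorm2sq m n (h - x)/2 + pnorm2sq m n (h - y)/2 - pnorm2sq m n (x - y)/4 := by
  show mnorm2sq m n (h.1 - (2⁻¹:ℝ) • (x.1 + y.1)) + mnorm2sq m n (h.2 - (2⁻¹:ℝ) • (x.2 + y.2))
      = (mnorm2sq m n (h.1 - x.1) + mnorm2sq m n (h.2 - x.2))/2
        + (mnorm2sq m n (h.1 - y.1) + mnorm2sq m n (h.2 - y.2))/2
        - (mnorm2sq m n (x.1 - y.1) + mnorm2sq m n (x.2 - y.2))/4
  rw [mnorm2sq_mid, mnorm2sq_mid]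
  ring

/-- Scalar estimate for the h-step descent. -/
lemma T2scalar (cP M eps s a ip d2 : ℝ) (heps : 0 < eps) (hs : eps ≤ s) (ha : eps ≤ a)
    (hcP0 : 0 ≤ cP) (hcPM : cP ≤ M) (hd2 : d2 = a^2 - 2*ip + s^2) (hd2nn : 0 ≤ d2) :
    -(M/(2*eps^3)) * d2 ≤ cP * (1/s - 1/a + (ip - a^2)/a^3) := by
  have hspos : 0 < s := lt_of_lt_of_le heps hs
  have hapos : 0 < a := lt_of_lt_of_le heps ha
  have key : 1/s - 1/a + (ip - a^2)/a^3
      = (s-a)^2*(s+2*a)/(2*a^3*s) - d2/(2*a^3) := by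
    rw [hd2]; field_simp; ring
  have hpos1 : 0 ≤ (s-a)^2*(s+2*a)/(2*a^3*s) := by positivity
  have h1 : -(d2/(2*a^3)) ≤ 1/s - 1/a + (ip - a^2)/a^3 := by rw [key]; linarith
  have h2 : cP * (-(d2/(2*a^3))) ≤ cP * (1/s - 1/a + (ip - a^2)/a^3) :=
    mul_le_mul_of_nonneg_left h1 hcP0
  refine le_trans ?_ h2
  -- -(M/(2 eps^3)) * d2 ≤ -(cP * d2/(2 a^3))
  have ha3 : eps^3 ≤ a^3 := pow_le_pow_left₀ heps.le ha 3
  have heps3 : (0:ℝ) < eps^3 := by positivity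
  have ha3pos : (0:ℝ) < a^3 := by positivity
  have hq : cP * d2 / (2*a^3) ≤ M * d2 / (2*eps^3) := by
    rw [div_le_div_iff₀ (by positivity) (by positivity)]
    have h1 : cP * d2 ≤ M * d2 := mul_le_mul_of_nonneg_right hcPM hd2nn
    have hM0 : 0 ≤ M := le_trans hcP0 hcPM
    nlinarith [mul_le_mul_of_nonneg_right h1 (by positivity : (0:ℝ) ≤ 2*eps^3),
      mul_le_mul_of_nonneg_left ha3 (mul_nonneg hM0 hd2nn)]
  have e1 : cP * (-(d2/(2*a^3))) = -(cP * d2/(2*a^3)) := by ring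
  have e2 : -(M/(2*eps^3)) * d2 = -(M * d2/(2*eps^3)) := by ring
  rw [e1, e2]
  linarith

/-- Pure scalar bound used in `Xbound`. -/
lemma Rscalar (eps s a : ℝ) (heps : 0 < eps) (hs : eps ≤ s) (ha : eps ≤ a) :
    (1/a^3 - 1/s^3)^2 * s^2 ≤ 9/eps^6 * (s-a)^2 := by
  have hspos : 0 < s := lt_of_lt_of_le heps hs
  have hapos : 0 < a := lt_of_lt_of_le heps ha
  have q1 : (1/a^3 - 1/s^3)*s = (s-a)*((s^2+s*a+a^2)/(a^3*s^2)) := by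
    field_simp; ring
  have q2 : (0:ℝ) ≤ (s^2+s*a+a^2)/(a^3*s^2) := by positivity
  have q3 : (s^2+s*a+a^2)/(a^3*s^2) ≤ 3/eps^3 := by
    rw [div_le_div_iff₀ (by positivity) (by positivity)]
    have f1 : eps^3 ≤ a^3 := pow_le_pow_left₀ heps.le ha 3
    have f2 : s^2*eps^3 ≤ s^2*a^3 := mul_le_mul_of_nonneg_left f1 (by positivity)
    have hann : (0:ℝ) ≤ a := le_trans heps.le ha
    have hsnn : (0:ℝ) ≤ s := le_trans heps.le hs
    have g1 : eps*eps ≤ a*a := mul_le_mul ha ha heps.le hann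
    have g2 : (eps*eps)*eps ≤ (a*a)*s :=
      mul_le_mul g1 hs heps.le (mul_nonneg hann hann)
    have f3 : eps^3 ≤ a^2*s := by nlinarith [g2]
    have f4 : (s*a)*eps^3 ≤ (s*a)*(a^2*s) := mul_le_mul_of_nonneg_left f3 (by positivity)
    have g3 : eps*eps ≤ a*s := mul_le_mul ha hs heps.le hann
    have g4 : (eps*eps)*eps ≤ (a*s)*s :=
      mul_le_mul g3 hs heps.le (mul_nonneg hann hsnn)
    have f5 : eps^3 ≤ a*s^2 := by nlinarith [g4]
    have f6 : a^2*eps^3 ≤ a^2*(a*s^2) := mul_le_mul_of_nonneg_left f5 (by positivity)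
    nlinarith [f2, f4, f6]
  have q4 : ((1/a^3 - 1/s^3)*s)^2 = (s-a)^2 * ((s^2+s*a+a^2)/(a^3*s^2))^2 := by
    rw [q1]; ring
  have q5 : ((s^2+s*a+a^2)/(a^3*s^2))^2 ≤ (3/eps^3)^2 := pow_le_pow_left₀ q2 q3 2
  have q6 : (3/eps^3)^2 = 9/eps^6 := by rw [div_pow, ← pow_mul]; norm_num
  calc (1/a^3 - 1/s^3)^2 * s^2 = ((1/a^3 - 1/s^3)*s)^2 := by ring
    _ = (s-a)^2 * ((s^2+s*a+a^2)/(a^3*s^2))^2 := q4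
    _ ≤ (s-a)^2 * (9/eps^6) := by
        rw [← q6]; exact mul_le_mul_of_nonneg_left q5 (sq_nonneg _)
    _ = 9/eps^6 * (s-a)^2 := by ring

lemma inv_cube_sq_le (eps a : ℝ) (heps : 0 < eps) (ha : eps ≤ a) :
    (1/a^3)^2 ≤ 1/eps^6 := by
  have hapos : 0 < a := lt_of_lt_of_le heps ha
  have ha3 : eps^3 ≤ a^3 := pow_le_pow_left₀ heps.le ha 3
  have h1 : 1/a^3 ≤ 1/eps^3 := one_div_le_one_div_of_le (by positivity) ha3
  have h2 : (1/a^3)^2 ≤ (1/eps^3)^2 := pow_le_pow_left₀ (by positivity) h1 2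
  calc (1/a^3)^2 ≤ (1/eps^3)^2 := h2
    _ = 1/eps^6 := by rw [div_pow, one_pow, ← pow_mul]

set_option maxHeartbeats 1000000 in
/-- Bound for the dual-variable drift term. -/
lemma Xbound (c cP M eps Ksq delta2 : ℝ)
    (h hP : (Fin m → Fin n → ℝ) × (Fin m → Fin n → ℝ))
    (heps : 0 < eps) (hs : eps ≤ pnorm2 m n h) (ha : eps ≤ pnorm2 m n hP)
    (hcP0 : 0 ≤ cP) (hcPM : cP ≤ M)
    (hdiff : (cP - c)^2 ≤ Ksq * delta2) :
    pnorm2sq m n ((cP/(pnorm2 m n hP)^3) • hP - (c/(pnorm2 m n h)^3) • h)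
      ≤ 40*M^2/eps^6 * pnorm2sq m n (hP - h) + 2*Ksq/eps^4 * delta2 := by
  set s : ℝ := pnorm2 m n h with hsdef
  set a : ℝ := pnorm2 m n hP with hadef
  have hspos : 0 < s := lt_of_lt_of_le heps hs
  have hapos : 0 < a := lt_of_lt_of_le heps ha
  have hs2 : s^2 = pnorm2sq m n h := pnorm2_sq h
  have ha2 : a^2 = pnorm2sq m n hP := pnorm2_sq hP
  clear_value s a
  set d2 : ℝ := pnorm2sq m n (hP - h) with hd2def
  set ip : ℝ := pinner m n hP h with hipdef
  have hd2 : d2 = a^2 - 2*ip + s^2 := by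
    rw [hd2def, hipdef, pnorm2sq_sub, ← hs2, ← ha2]
  have hd2nn : 0 ≤ d2 := by rw [hd2def]; exact pnorm2sq_nonneg _
  have hCS : |ip| ≤ a * s := by
    rw [hipdef, hadef, hsdef]; exact abs_pinner_le hP h
  clear_value d2 ip
  have hsa : (s - a)^2 ≤ d2 := by
    have := abs_le.mp hCS
    nlinarith [this.2]
  set R : (Fin m → Fin n → ℝ) × (Fin m → Fin n → ℝ)
    := (1/a^3) • hP - (1/s^3) • h with hRdef
  -- R decomposition and bound
  have hR1 : R = (1/a^3) • (hP - h) + (1/a^3 - 1/s^3) • h := by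
    rw [hRdef, smul_sub, sub_smul]
    abel
  clear_value R
  have hRb : pnorm2sq m n R ≤ 20/eps^6 * d2 := by
    have h1 : pnorm2sq m n R ≤ 2 * ((1/a^3)^2 * d2) + 2 * ((1/a^3 - 1/s^3)^2 * pnorm2sq m n h) := by
      rw [hR1]
      have := pnorm2sq_add_le ((1/a^3) • (hP - h)) ((1/a^3 - 1/s^3) • h)
      rw [pnorm2sq_smul, pnorm2sq_smul, ← hd2def] at this
      exact this
    rw [← hs2] at h1
    have r1 : (1/a^3)^2 ≤ 1/eps^6 := inv_cube_sq_le eps a heps ha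
    have r2 : (1/a^3 - 1/s^3)^2 * s^2 ≤ 9/eps^6 * (s-a)^2 := Rscalar eps s a heps hs ha
    have r3 : 9/eps^6 * (s-a)^2 ≤ 9/eps^6 * d2 :=
      mul_le_mul_of_nonneg_left hsa (by positivity)
    have r4 : (1/a^3)^2 * d2 ≤ 1/eps^6 * d2 := mul_le_mul_of_nonneg_right r1 hd2nn
    -- combine
    calc pnorm2sq m n R ≤ 2 * ((1/a^3)^2 * d2) + 2 * ((1/a^3 - 1/s^3)^2 * s^2) := h1
      _ ≤ 2 * (1/eps^6 * d2) + 2 * (9/eps^6 * d2) := by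
          have := le_trans r2 r3
          linarith
      _ = 20/eps^6 * d2 := by ring
  -- X decomposition
  set X : (Fin m → Fin n → ℝ) × (Fin m → Fin n → ℝ)
    := (cP/a^3) • hP - (c/s^3) • h with hXdef
  have hX1 : X = cP • R + ((cP - c)/s^3) • h := by
    rw [hXdef, hRdef, smul_sub, smul_smul, smul_smul]
    rw [show cP * (1/a^3) = cP/a^3 by ring, show cP * (1/s^3) = cP/s^3 by ring]
    rw [show (cP - c)/s^3 = cP/s^3 - c/s^3 by ring, sub_smul]
    abel
  clear_value X
  have hXb : pnorm2sq m n X ≤ 2 * (cP^2 * pnorm2sq m n R) + 2 * (((cP-c)/s^3)^2 * s^2) := by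
    rw [hX1, hs2]
    have := pnorm2sq_add_le (cP • R) (((cP - c)/s^3) • h)
    rw [pnorm2sq_smul, pnorm2sq_smul] at this
    exact this
  have hM1 : cP^2 ≤ M^2 := by nlinarith
  have hRnn : 0 ≤ pnorm2sq m n R := pnorm2sq_nonneg _
  have t1 : cP^2 * pnorm2sq m n R ≤ M^2 * (20/eps^6 * d2) := by
    calc cP^2 * pnorm2sq m n R ≤ M^2 * pnorm2sq m n R := mul_le_mul_of_nonneg_right hM1 hRnn
      _ ≤ M^2 * (20/eps^6 * d2) := mul_le_mul_of_nonneg_left hRb (by positivity)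
  have t2 : ((cP-c)/s^3)^2 * s^2 ≤ Ksq * delta2 / eps^4 := by
    have e1 : ((cP-c)/s^3)^2 * s^2 = (cP-c)^2 / s^4 := by
      field_simp
    rw [e1]
    have hs4 : eps^4 ≤ s^4 := pow_le_pow_left₀ heps.le hs 4
    have hKd : 0 ≤ Ksq * delta2 := le_trans (sq_nonneg _) hdiff
    exact div_le_div₀ hKd hdiff (by positivity) hs4
  calc pnorm2sq m n X ≤ 2 * (cP^2 * pnorm2sq m n R) + 2 * (((cP-c)/s^3)^2 * s^2) := hXb
    _ ≤ 2 * (M^2 * (20/eps^6 * d2)) + 2 * (Ksq * delta2 / eps^4) := by linarith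
    _ = 40*M^2/eps^6 * d2 + 2*Ksq/eps^4 * delta2 := by ring

end PartE

set_option maxHeartbeats 2000000 in
/-- Paper's Lemma 4.2 (sufficient descent) for one ADMM step. -/
theorem stmt1 (m n p : ℕ) (hm : 0 < m) (hn : 0 < n)
    (A : Matrix (Fin p) (Fin m × Fin n) ℝ) (f : Fin p → ℝ)
    (lam ε M : ℝ) (hlam : 0 < lam) (hε : 0 < ε) (hM : 0 ≤ M)
    (hker : ∀ v : Fin m → Fin n → ℝ,
      A.mulVec (flatten m n v) = 0 → grad m n v = 0 → v = 0) :
    ∃ ρ₀ : ℝ, ∀ ρ₂ : ℝ, ρ₀ ≤ ρ₂ →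
      ∃ c₁ c₂ : ℝ, 0 < c₁ ∧ 0 < c₂ ∧
        ∀ (u uP : Fin m → Fin n → ℝ)
          (h hP b bP : (Fin m → Fin n → ℝ) × (Fin m → Fin n → ℝ)),
          (∀ v, augL m n p A f lam ρ₂ uP h b ≤ augL m n p A f lam ρ₂ v h b) →
          (hP ≠ 0 ∧ ∀ g, g ≠ 0 →
            augL m n p A f lam ρ₂ uP hP b ≤ augL m n p A f lam ρ₂ uP g b) →
          bP = b + grad m n uP - hP →
          ε ≤ pnorm2 m n h → ε ≤ pnorm2 m n hP →
          gradL1 m n u ≤ M → gradL1 m n uP ≤ M →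
          b = (-(gradL1 m n u / (ρ₂ * (pnorm2 m n h) ^ 3))) • h →
          augL m n p A f lam ρ₂ uP hP bP ≤
            augL m n p A f lam ρ₂ u h b
              - c₁ * mnorm2sq m n (uP - u) - c₂ * pnorm2sq m n (hP - h) := by
  obtain ⟨α, hα, hcoerc⟩ := exists_alpha hm hn A lam hlam hker
  have hKsqnn : (0:ℝ) ≤ (4*(m:ℝ)*n)^2 := sq_nonneg _
  refine ⟨lam + 1 + 4*M/ε^3 + 16*(4*(m:ℝ)*n)^2/(α*ε^4) + 320*M^2/ε^6, ?_⟩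
  intro ρ₂ hρ₂
  have t1nn : (0:ℝ) ≤ 4*M/ε^3 := by positivity
  have t2nn : (0:ℝ) ≤ 16*(4*(m:ℝ)*n)^2/(α*ε^4) := by positivity
  have t3nn : (0:ℝ) ≤ 320*M^2/ε^6 := by positivity
  have hρ1 : 1 ≤ ρ₂ := by linarith
  have hρpos : 0 < ρ₂ := by linarith
  have hρlam : lam ≤ ρ₂ := by linarith
  have hρa : 4*M/ε^3 ≤ ρ₂ := by linarith
  have hρb : 16*(4*(m:ℝ)*n)^2/(α*ε^4) ≤ ρ₂ := by linarith
  have hρc : 320*M^2/ε^6 ≤ ρ₂ := by linarith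
  refine ⟨α/8, ρ₂/8, by positivity, by positivity, ?_⟩
  intro u uP h hP b bP hminU hminH hbP hsh hshP hMu hMuP hbform
  have spos : 0 < pnorm2 m n h := lt_of_lt_of_le hε hsh
  have apos : 0 < pnorm2 m n hP := lt_of_lt_of_le hε hshP
  have hsne : pnorm2 m n h ≠ 0 := ne_of_gt spos
  have hane : pnorm2 m n hP ≠ 0 := ne_of_gt apos
  have hρne : ρ₂ ≠ 0 := ne_of_gt hρpos
  have d2nn : 0 ≤ pnorm2sq m n (hP - h) := pnorm2sq_nonneg _
  have δ2nn : 0 ≤ mnorm2sq m n (uP - u) := mnorm2sq_nonneg _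
  have hs2 : (pnorm2 m n h)^2 = pnorm2sq m n h := pnorm2_sq h
  have ha2 : (pnorm2 m n hP)^2 = pnorm2sq m n hP := pnorm2_sq hP
  -- ================= STEP 1 : u-update descent =================
  have hT1 : augL m n p A f lam ρ₂ u h b - augL m n p A f lam ρ₂ uP h b
      ≥ α/4 * mnorm2sq m n (uP - u) := by
    have hmin := hminU ((2⁻¹:ℝ) • (u + uP))
    have hsplit : (2⁻¹:ℝ) • (u + uP) = (2⁻¹:ℝ) • u + (2⁻¹:ℝ) • uP := smul_add _ _ _
    have hgm : grad m n ((2⁻¹:ℝ) • (u + uP))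
        = (2⁻¹:ℝ) • grad m n u + (2⁻¹:ℝ) • grad m n uP := by
      rw [hsplit]; exact grad_lin _ _ _ _
    have hAm : A.mulVec (flatten m n ((2⁻¹:ℝ) • (u + uP)))
        = (2⁻¹:ℝ) • (A.mulVec (flatten m n u) + A.mulVec (flatten m n uP)) := by
      rw [flatten_smul, flatten_add, Matrix.mulVec_smul, Matrix.mulVec_add]
    have e1 : vnorm2sq p (A.mulVec (flatten m n ((2⁻¹:ℝ) • (u + uP))) - f)
        = vnorm2sq p (A.mulVec (flatten m n u) - f)/2
          + vnorm2sq p (A.mulVec (flatten m n uP) - f)/2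
          - vnorm2sq p (A.mulVec (flatten m n (u - uP)))/4 := by
      rw [hAm, vnorm2sq_mid, flatten_sub, Matrix.mulVec_sub]
    have e2 : pinner m n b (grad m n ((2⁻¹:ℝ) • (u + uP)) - h)
        = pinner m n b (grad m n u - h)/2 + pinner m n b (grad m n uP - h)/2 := by
      rw [hgm, pinner_sub_right, pinner_add_right, pinner_smul_right, pinner_smul_right,
        pinner_sub_right, pinner_sub_right]
      ring
    have e3 : pnorm2sq m n (h - grad m n ((2⁻¹:ℝ) • (u + uP)))
        = pnorm2sq m n (h - grad m n u)/2 + pnorm2sq m n (h - grad m n uP)/2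
          - pnorm2sq m n (grad m n (u - uP))/4 := by
      have hg2 : grad m n ((2⁻¹:ℝ) • (u + uP))
          = (2⁻¹:ℝ) • (grad m n u + grad m n uP) := by rw [hgm, smul_add]
      rw [hg2, pnorm2sq_mid, grad_sub]
    have e4 : gradL1 m n ((2⁻¹:ℝ) • (u + uP)) / pnorm2 m n h
        ≤ (gradL1 m n u / pnorm2 m n h + gradL1 m n uP / pnorm2 m n h)/2 := by
      have hg := gradL1_mid_le u uP
      have h1 : gradL1 m n ((2⁻¹:ℝ) • (u + uP)) / pnorm2 m n h
          ≤ ((gradL1 m n u + gradL1 m n uP)/2) / pnorm2 m n h :=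
        (div_le_div_iff_of_pos_right spos).mpr hg
      have h2 : ((gradL1 m n u + gradL1 m n uP)/2) / pnorm2 m n h
          = (gradL1 m n u / pnorm2 m n h + gradL1 m n uP / pnorm2 m n h)/2 := by ring
      linarith
    have key : augL m n p A f lam ρ₂ ((2⁻¹:ℝ) • (u + uP)) h b
        ≤ (augL m n p A f lam ρ₂ u h b + augL m n p A f lam ρ₂ uP h b)/2
          - lam/8 * vnorm2sq p (A.mulVec (flatten m n (u - uP)))
          - ρ₂/8 * pnorm2sq m n (grad m n (u - uP)) := by
      simp only [augL]
      rw [e1, e2, e3]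
      have m1 : lam/2 * (vnorm2sq p (A.mulVec (flatten m n u) - f)/2
          + vnorm2sq p (A.mulVec (flatten m n uP) - f)/2
          - vnorm2sq p (A.mulVec (flatten m n (u - uP)))/4)
          = lam/2 * vnorm2sq p (A.mulVec (flatten m n u) - f)/2
            + lam/2 * vnorm2sq p (A.mulVec (flatten m n uP) - f)/2
            - lam/8 * vnorm2sq p (A.mulVec (flatten m n (u - uP))) := by ring
      have m2 : ρ₂ * (pinner m n b (grad m n u - h)/2 + pinner m n b (grad m n uP - h)/2)
          = ρ₂ * pinner m n b (grad m n u - h)/2 + ρ₂ * pinner m n b (grad m n uP - h)/2 := by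
        ring
      have m3 : ρ₂/2 * (pnorm2sq m n (h - grad m n u)/2 + pnorm2sq m n (h - grad m n uP)/2
          - pnorm2sq m n (grad m n (u - uP))/4)
          = ρ₂/2 * pnorm2sq m n (h - grad m n u)/2 + ρ₂/2 * pnorm2sq m n (h - grad m n uP)/2
            - ρ₂/8 * pnorm2sq m n (grad m n (u - uP)) := by ring
      linarith [e4, m1, m2, m3]
    have hcoer := hcoerc (u - uP)
    have hmono : lam * pnorm2sq m n (grad m n (u - uP)) ≤ ρ₂ * pnorm2sq m n (grad m n (u - uP)) :=
      mul_le_mul_of_nonneg_right hρlam (pnorm2sq_nonneg _)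
    have hsub : mnorm2sq m n (u - uP) = mnorm2sq m n (uP - u) := mnorm2sq_sub_comm u uP
    rw [hsub] at hcoer
    linarith [hmin, key, hcoer, hmono]
  -- ================= STEP 2 : h-update descent =================
  have hminH' : ∀ g : (Fin m → Fin n → ℝ) × (Fin m → Fin n → ℝ), g ≠ 0 →
      gradL1 m n uP / pnorm2 m n hP + ρ₂ * pinner m n b (grad m n uP - hP)
        + ρ₂/2 * pnorm2sq m n (hP - grad m n uP)
      ≤ gradL1 m n uP / pnorm2 m n g + ρ₂ * pinner m n b (grad m n uP - g)
        + ρ₂/2 * pnorm2sq m n (g - grad m n uP) := by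
    intro g hg
    have := hminH.2 g hg
    simp only [augL] at this
    linarith
  have hstat := stationarity (gradL1 m n uP) ρ₂ hρpos (grad m n uP) b hP hminH.1 hminH'
  have hdir : pinner m n (hP - grad m n uP) (h - hP)
      = pinner m n b (h - hP)
        + (gradL1 m n uP / (ρ₂ * (pnorm2 m n hP)^3)) * pinner m n hP (h - hP) := by
    rw [hstat, pinner_add_left, pinner_smul_left]
  have hd2e : pnorm2sq m n (hP - h)
      = (pnorm2 m n hP)^2 - 2 * pinner m n hP h + (pnorm2 m n h)^2 := by
    rw [pnorm2sq_sub, hs2, ha2]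
  have hscal := T2scalar (gradL1 m n uP) M ε (pnorm2 m n h) (pnorm2 m n hP)
      (pinner m n hP h) (pnorm2sq m n (hP - h)) hε hsh hshP (gradL1_nonneg uP) hMuP hd2e d2nn
  have hT2 : augL m n p A f lam ρ₂ uP h b - augL m n p A f lam ρ₂ uP hP b
      ≥ ρ₂/2 * pnorm2sq m n (hP - h) - M/(2*ε^3) * pnorm2sq m n (hP - h) := by
    have A1 : ρ₂ * pinner m n b (grad m n uP - h)
        = ρ₂ * pinner m n b (grad m n uP - hP) - ρ₂ * pinner m n b (h - hP) := by
      rw [pinner_sub_right, pinner_sub_right, pinner_sub_right]; ring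
    have A2 : ρ₂/2 * pnorm2sq m n (h - grad m n uP)
        = ρ₂/2 * pnorm2sq m n (hP - grad m n uP)
          + ρ₂ * pinner m n (hP - grad m n uP) (h - hP)
          + ρ₂/2 * pnorm2sq m n (hP - h) := by
      have e : h - grad m n uP = (hP - grad m n uP) + (h - hP) := by abel
      rw [e, pnorm2sq_add, pnorm2sq_sub_comm h hP]
      ring
    have A3 : ρ₂ * pinner m n (hP - grad m n uP) (h - hP)
        = ρ₂ * pinner m n b (h - hP)
          + gradL1 m n uP / (pnorm2 m n hP)^3 * pinner m n hP h
          - gradL1 m n uP / (pnorm2 m n hP)^3 * (pnorm2 m n hP)^2 := by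
      rw [hdir]
      have i3 : pinner m n hP (h - hP) = pinner m n hP h - (pnorm2 m n hP)^2 := by
        rw [pinner_sub_right, pinner_self, ha2]
      rw [i3]
      field_simp
      ring
    have EB : gradL1 m n uP * (1/pnorm2 m n h - 1/pnorm2 m n hP
          + (pinner m n hP h - (pnorm2 m n hP)^2)/(pnorm2 m n hP)^3)
        = gradL1 m n uP / pnorm2 m n h - gradL1 m n uP / pnorm2 m n hP
          + gradL1 m n uP / (pnorm2 m n hP)^3 * pinner m n hP h
          - gradL1 m n uP / (pnorm2 m n hP)^3 * (pnorm2 m n hP)^2 := by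
      ring
    simp only [augL]
    linarith [A1, A2, A3, hscal, EB]
  -- ================= STEP 3 : dual update =================
  have hT3 : augL m n p A f lam ρ₂ uP hP b - augL m n p A f lam ρ₂ uP hP bP
      = -(ρ₂ * pnorm2sq m n (hP - grad m n uP)) := by
    simp only [augL]
    have e : pinner m n b (grad m n uP - hP) - pinner m n bP (grad m n uP - hP)
        = - pnorm2sq m n (grad m n uP - hP) := by
      rw [← pinner_sub_left]
      have hb : b - bP = -(grad m n uP - hP) := by rw [hbP]; abel
      rw [hb, pinner_neg_left, pinner_self]
    have e2 : pnorm2sq m n (grad m n uP - hP) = pnorm2sq m n (hP - grad m n uP) :=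
      pnorm2sq_sub_comm _ _
    have e3 : ρ₂ * pinner m n b (grad m n uP - hP) - ρ₂ * pinner m n bP (grad m n uP - hP)
        = -(ρ₂ * pnorm2sq m n (hP - grad m n uP)) := by
      rw [← e2]
      have := e
      nlinarith [e]
    linarith [e3]
  have hvec : hP - grad m n uP
      = (gradL1 m n uP / (ρ₂ * (pnorm2 m n hP)^3)) • hP
        - (gradL1 m n u / (ρ₂ * (pnorm2 m n h)^3)) • h := by
    rw [hstat, hbform, neg_smul]
    abel
  have hNval : ρ₂ * pnorm2sq m n (hP - grad m n uP)
      = pnorm2sq m n ((gradL1 m n uP/(pnorm2 m n hP)^3) • hP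
          - (gradL1 m n u/(pnorm2 m n h)^3) • h) / ρ₂ := by
    rw [hvec]
    simp only [pnorm2sq_sub, pnorm2sq_smul, pinner_smul_left, pinner_smul_right]
    field_simp
  have hdiffsq : (gradL1 m n uP - gradL1 m n u)^2 ≤ (4*(m:ℝ)*n)^2 * mnorm2sq m n (uP - u) := by
    have h1 : |gradL1 m n uP - gradL1 m n u| ≤ gradL1 m n (uP - u) := gradL1_abs_sub uP u
    have h2 : gradL1 m n (uP - u) ≤ 4*(m:ℝ)*n * Real.sqrt (mnorm2sq m n (uP - u)) :=
      gradL1_le_sqrt _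
    have h3 := le_trans h1 h2
    have h4 : |gradL1 m n uP - gradL1 m n u|^2
        ≤ (4*(m:ℝ)*n * Real.sqrt (mnorm2sq m n (uP - u)))^2 :=
      pow_le_pow_left₀ (abs_nonneg _) h3 2
    rw [sq_abs] at h4
    have h5 : (4*(m:ℝ)*n * Real.sqrt (mnorm2sq m n (uP - u)))^2
        = (4*(m:ℝ)*n)^2 * mnorm2sq m n (uP - u) := by
      rw [mul_pow, Real.sq_sqrt δ2nn]
    linarith
  have hXb := Xbound (gradL1 m n u) (gradL1 m n uP) M ε ((4*(m:ℝ)*n)^2)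
      (mnorm2sq m n (uP - u)) h hP hε hsh hshP (gradL1_nonneg uP) hMuP hdiffsq
  have hT3' : augL m n p A f lam ρ₂ uP hP b - augL m n p A f lam ρ₂ uP hP bP
      ≥ -(40*M^2/ε^6/ρ₂ * pnorm2sq m n (hP - h))
        - (2*(4*(m:ℝ)*n)^2/ε^4/ρ₂ * mnorm2sq m n (uP - u)) := by
    rw [hT3, hNval]
    have hdiv := (div_le_div_iff_of_pos_right hρpos).mpr hXb
    have e : (40*M^2/ε^6 * pnorm2sq m n (hP - h)
        + 2*(4*(m:ℝ)*n)^2/ε^4 * mnorm2sq m n (uP - u))/ρ₂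
        = 40*M^2/ε^6/ρ₂ * pnorm2sq m n (hP - h)
          + 2*(4*(m:ℝ)*n)^2/ε^4/ρ₂ * mnorm2sq m n (uP - u) := by ring
    linarith
  -- ================= STEP 4 : assembly =================
  have hcond1 : 2*(4*(m:ℝ)*n)^2/ε^4/ρ₂ * mnorm2sq m n (uP - u)
      ≤ α/8 * mnorm2sq m n (uP - u) := by
    refine mul_le_mul_of_nonneg_right ?_ δ2nn
    rw [div_le_iff₀ hρpos]
    rw [div_le_iff₀ (by positivity : (0:ℝ) < α*ε^4)] at hρb
    rw [div_le_iff₀ (by positivity : (0:ℝ) < ε^4)]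
    nlinarith [hρb]
  have hcond2 : M/(2*ε^3) * pnorm2sq m n (hP - h) ≤ ρ₂/8 * pnorm2sq m n (hP - h) := by
    refine mul_le_mul_of_nonneg_right ?_ d2nn
    rw [div_le_iff₀ (by positivity : (0:ℝ) < 2*ε^3)]
    rw [div_le_iff₀ (by positivity : (0:ℝ) < ε^3)] at hρa
    nlinarith [hρa]
  have hcond3 : 40*M^2/ε^6/ρ₂ * pnorm2sq m n (hP - h) ≤ ρ₂/8 * pnorm2sq m n (hP - h) := by
    refine mul_le_mul_of_nonneg_right ?_ d2nn
    rw [div_le_iff₀ hρpos]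
    rw [div_le_iff₀ (by positivity : (0:ℝ) < ε^6)] at hρc
    have hsq : ρ₂ ≤ ρ₂ * ρ₂ := by nlinarith
    have h6 : ρ₂ * ε^6 ≤ ρ₂ * ρ₂ * ε^6 :=
      mul_le_mul_of_nonneg_right hsq (by positivity)
    rw [div_le_iff₀ (by positivity : (0:ℝ) < ε^6)]
    linarith [hρc, h6]
  have hretail : 0 ≤ ρ₂ * pnorm2sq m n (hP - h) := mul_nonneg hρpos.le d2nn
  linarith [hT1, hT2, hT3', hcond1, hcond2, hcond3, hretail]
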